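/- Every Laurent polynomial h ∈ ℤ[v, v⁻¹] has a unique decomposition h = h′ + h″ where h′ is fixed by the bar involution (i.e. h′(v⁻¹) = h′(v)) and h″ ∈ v⁻¹ℤ[v⁻¹]. -/

import Mathlib

open LaurentPolynomial

/-- The Gaussian polynomial `⟦N choose t⟧`, an element of `ℤ[v, v⁻¹]` (here `v = T 1`),
defined via the `q`-Pascal recursion (with `q = v²`):
`⟦N choose 0⟧ = 1`, `⟦0 choose t+1⟧ = 0`,
`⟦N+1 choose t+1⟧ = ⟦N choose t⟧ + v^{2(t+1)} ⟦N choose t+1⟧`.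
It equals the product `∏_{i=1}^{t} (v^{2(N−i+1)} − 1)/(v^{2i} − 1)` when `t ≤ N`,
and vanishes when `t > N`. -/
noncomputable def gaussPoly : ℕ → ℕ → LaurentPolynomial ℤ
  | _, 0 => 1
  | 0, _ + 1 => 0
  | N + 1, t + 1 => gaussPoly N t + T (2 * ((t : ℤ) + 1)) * gaussPoly N (t + 1)

/-- The symmetric Gaussian polynomial `[N choose t] = v^{−t(N−t)} ⟦N choose t⟧`. -/
noncomputable def sgauss (N t : ℕ) : LaurentPolynomial ℤ :=
  T (-((t : ℤ) * ((N : ℤ) - (t : ℤ)))) * gaussPoly N t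

/-- The bar involution on `ℤ[v, v⁻¹]`: the ring automorphism fixing `ℤ` and sending
`v ↦ v⁻¹` (substitution `T ↦ T⁻¹`). -/
noncomputable def bar (p : LaurentPolynomial ℤ) : LaurentPolynomial ℤ :=
  LaurentPolynomial.invert p

/-- `p ∈ v⁻¹ℤ[v⁻¹]`: every monomial `v^m` occurring in `p` with nonzero coefficient has
`m ≤ −1`. -/
def InNegPart (p : LaurentPolynomial ℤ) : Prop :=
  ∀ m : ℤ, p.coeff m ≠ 0 → m < 0

noncomputable def toLP (f : ℤ →₀ ℤ) : LaurentPolynomial ℤ := AddMonoidAlgebra.ofCoeff f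

@[simp] lemma toLP_apply (f : ℤ →₀ ℤ) (n : ℤ) : (toLP f).coeff n = f n := rfl

/-- Every Laurent polynomial `h ∈ ℤ[v, v⁻¹]` has a unique decomposition `h = h′ + h″` with
`h′` fixed by the bar involution and `h″ ∈ v⁻¹ℤ[v⁻¹]`. -/
theorem bar_invariant_decomposition (h : LaurentPolynomial ℤ) :
    ∃! p : LaurentPolynomial ℤ × LaurentPolynomial ℤ,
      h = p.1 + p.2 ∧ bar p.1 = p.1 ∧ InNegPart p.2 := by
  set h' : LaurentPolynomial ℤ :=
    toLP (Finsupp.filter (fun n => 0 ≤ n) h.coeff)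
      + invert (toLP (Finsupp.filter (fun n => 0 < n) h.coeff)) with hh'
  have h'app : ∀ n : ℤ, h'.coeff n = Finsupp.filter (fun n => 0 ≤ n) h.coeff n
      + Finsupp.filter (fun n => 0 < n) h.coeff (-n) := by
    intro n
    rw [hh']
    rw [AddMonoidAlgebra.coeff_add, Finsupp.add_apply, invert_apply, toLP_apply, toLP_apply]
  refine ⟨⟨h', h - h'⟩, ⟨by ring, ?_, ?_⟩, ?_⟩
  · -- bar h' = h'
    ext n
    rw [bar, invert_apply, h'app, h'app, Finsupp.filter_apply, Finsupp.filter_apply,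
      Finsupp.filter_apply, Finsupp.filter_apply, neg_neg]
    rcases lt_trichotomy n 0 with hn | hn | hn
    · simp [hn.le, hn, not_le.mpr hn, not_lt.mpr hn.le, neg_pos.mpr hn, neg_nonneg.mpr hn.le]
    · subst hn; simp
    · simp [hn.le, hn, not_le.mpr (neg_neg_iff_pos.mpr hn),
        not_lt.mpr (neg_nonpos_of_nonneg hn.le), not_le.mpr hn, not_lt.mpr hn.le]
  · -- InNegPart
    intro m hm
    by_contra hm0
    push_neg at hm0
    apply hm
    rw [AddMonoidAlgebra.coeff_sub, Finsupp.sub_apply, h'app, Finsupp.filter_apply, Finsupp.filter_apply]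
    have : ¬ 0 < -m := by omega
    simp [hm0, this]
  · rintro ⟨p, q⟩ ⟨hsum, hbar, hneg⟩
    simp only at hsum hbar hneg
    have key : p = h' := by
      ext n
      have hsym : ∀ m : ℤ, p.coeff m = p.coeff (-m) := by
        intro m
        conv_lhs => rw [← hbar]
        rw [bar, invert_apply]
      have hq : ∀ m : ℤ, 0 ≤ m → q.coeff m = 0 := by
        intro m hm
        by_contra hc
        exact absurd (hneg m hc) (by omega)
      have hco : ∀ m : ℤ, 0 ≤ m → h.coeff m = p.coeff m := by
        intro m hm
        rw [hsum, AddMonoidAlgebra.coeff_add, Finsupp.add_apply, hq m hm, add_zero]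
      rw [h'app, Finsupp.filter_apply, Finsupp.filter_apply]
      rcases le_or_gt 0 n with hn | hn
      · have : ¬ 0 < -n := by omega
        simp [hn, this, hco n hn]
      · have h1 : ¬ 0 ≤ n := not_le.mpr hn
        have h2 : 0 < -n := by omega
        simp only [h1, if_false, h2, if_true, zero_add]
        rw [hsym n, hco (-n) (by omega)]
    have : q = h - h' := by rw [← key]; rw [hsum]; ring
    simp [Prod.ext_iff, key, this]
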